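/- arXiv:2411.06571 — 2 statements merged into one kernel-verified Lean document; each statement's English description precedes it below -/
import Mathlib

section
/- Suppose the family G satisfies conditions (1), (2), and (3_2). For rational t > 0 define X_t := e^{−t/2} G_{0,t}, and let F_t be the σ-algebra generated by the random variables G_{u,v} for rationals 0 ≤ u ≤ v ≤ t. Then (X_t) is a martingale: each X_t is integrable, and for all rationals 0 < s ≤ t one has E[X_t | F_s] = X_s almost surely. -/
open MeasureTheory ProbabilityTheory Filter

/-- Condition (1): variables indexed by pairwise disjoint open rational intervals are
jointly independent. -/
def Cond1 {Ω : Type*} [MeasurableSpace Ω] (P : Measure Ω) (G : ℚ → ℚ → Ω → ℝ) : Prop :=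
  ∀ (k : ℕ) (s t : Fin k → ℚ), (∀ i, s i < t i) →
    (Pairwise fun i j => Disjoint (Set.Ioo (s i) (t i)) (Set.Ioo (s j) (t j))) →
    iIndepFun (fun i ω => G (s i) (t i) ω) P

/-- Condition (2): the flow property `G_{s,t} G_{t,u} = G_{s,u}` almost surely. -/
def Cond2 {Ω : Type*} [MeasurableSpace Ω] (P : Measure Ω) (G : ℚ → ℚ → Ω → ℝ) : Prop :=
  ∀ s t u : ℚ, s < t → t < u → (fun ω => G s t ω * G t u ω) =ᵐ[P] G s u

/-- Condition (3_N): moments `E[G_{s,t}^n] = exp(n²(t-s)/2)` for `1 ≤ n ≤ N`. -/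
def Cond3 {Ω : Type*} [MeasurableSpace Ω] (P : Measure Ω) (G : ℚ → ℚ → Ω → ℝ) (N : ℕ) : Prop :=
  ∀ n : ℕ, 1 ≤ n → n ≤ N → ∀ s t : ℚ, s ≤ t →
    ∫ ω, (G s t ω) ^ n ∂P = Real.exp ((n : ℝ) ^ 2 / 2 * ((t : ℝ) - (s : ℝ)))

/-- The σ-algebra generated by the random variables `G_{u,v}` for rationals
`0 ≤ u ≤ v ≤ t`. -/
def flowFiltration {Ω : Type*} (G : ℚ → ℚ → Ω → ℝ) (t : ℚ) : MeasurableSpace Ω :=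
  ⨆ (u : ℚ) (v : ℚ) (_ : 0 ≤ u) (_ : u ≤ v) (_ : v ≤ t),
    MeasurableSpace.comap (G u v) inferInstance

section Aux

variable {Ω : Type*} {m0 : MeasurableSpace Ω} {P : Measure Ω} [IsProbabilityMeasure P]
  {G : ℚ → ℚ → Ω → ℝ}

lemma preimage_ae_eq {g h : Ω → ℝ} (hgh : g =ᵐ[P] h) (B : Set ℝ) :
    g ⁻¹' B =ᵐ[P] h ⁻¹' B := by
  filter_upwards [hgh] with ω hω
  show (g ω ∈ B) = (h ω ∈ B)
  rw [hω]

lemma biInter_ae_eq {ι : Type*} [DecidableEq ι] (I : Finset ι) {f g : ι → Set Ω}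
    (h : ∀ i ∈ I, f i =ᵐ[P] g i) :
    (⋂ i ∈ I, f i) =ᵐ[P] ⋂ i ∈ I, g i := by
  induction I using Finset.induction with
  | empty => simp
  | insert a I' hnot ih =>
    rw [Finset.set_biInter_insert, Finset.set_biInter_insert]
    exact MeasureTheory.ae_eq_set_inter (h a (Finset.mem_insert_self a I'))
      (ih fun i hi => h i (Finset.mem_insert_of_mem hi))

lemma sq_integrable_of_cond3 (h3 : Cond3 P G 2) (hmeas : ∀ s t : ℚ, Measurable (G s t))
    (s t : ℚ) (hst : s ≤ t) : Integrable (fun ω => (G s t ω) ^ 2) P := by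
  by_contra h
  have h2 := h3 2 one_le_two le_rfl s t hst
  rw [integral_undef h] at h2
  exact (Real.exp_pos _).ne h2

lemma integrable_of_cond3 (h3 : Cond3 P G 2) (hmeas : ∀ s t : ℚ, Measurable (G s t))
    (s t : ℚ) (hst : s ≤ t) : Integrable (G s t) P := by
  have hsq := sq_integrable_of_cond3 h3 hmeas s t hst
  have hm2 : MemLp (G s t) 2 P :=
    (memLp_two_iff_integrable_sq (hmeas s t).aestronglyMeasurable).2 hsq
  exact hm2.integrable one_le_two

lemma diag_ae_one (h3 : Cond3 P G 2) (hmeas : ∀ s t : ℚ, Measurable (G s t))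
    (u : ℚ) : G u u =ᵐ[P] fun _ => (1 : ℝ) := by
  have h1 := h3 1 le_rfl one_le_two u u le_rfl
  have h2 := h3 2 one_le_two le_rfl u u le_rfl
  simp only [sub_self, mul_zero, Real.exp_zero, pow_one] at h1 h2
  have hint : Integrable (G u u) P := integrable_of_cond3 h3 hmeas u u le_rfl
  have hsq : Integrable (fun ω => (G u u ω) ^ 2) P := sq_integrable_of_cond3 h3 hmeas u u le_rfl
  have hfi : Integrable (fun ω => (G u u ω - 1) ^ 2) P := by
    have : (fun ω => (G u u ω - 1) ^ 2)
        = fun ω => ((G u u ω) ^ 2 - 2 * G u u ω) + 1 := by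
      funext ω; ring
    rw [this]
    exact (hsq.sub (hint.const_mul 2)).add (integrable_const 1)
  have hzero : ∫ ω, (G u u ω - 1) ^ 2 ∂P = 0 := by
    have : (fun ω => (G u u ω - 1) ^ 2)
        = fun ω => ((G u u ω) ^ 2 - 2 * G u u ω) + 1 := by
      funext ω; ring
    have hint1 : Integrable (fun ω => G u u ω ^ 2 - 2 * G u u ω) P :=
      hsq.sub (hint.const_mul 2)
    rw [this, integral_add hint1 (integrable_const 1),
      integral_sub hsq (hint.const_mul 2), integral_const_mul, integral_const]
    simp [h1, h2]
    norm_num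
  have := (integral_eq_zero_iff_of_nonneg (fun ω => sq_nonneg _) hfi).1 hzero
  filter_upwards [this] with ω hω
  have : (G u u ω - 1) ^ 2 = 0 := hω
  have := pow_eq_zero_iff (n := 2) (by norm_num) |>.1 this
  linarith [sub_eq_zero.1 this]

lemma chain_lt (r : ℕ → ℚ) :
    ∀ j i, i < j → (∀ k, k < j → r k < r (k + 1)) → r i < r j := by
  intro j
  induction j with
  | zero => omega
  | succ j ih =>
    intro i hij hr
    rcases Nat.lt_or_ge i j with h | h
    · exact (ih i h fun k hk => hr k (by omega)).trans (hr j (by omega))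
    · have : i = j := by omega
      subst this
      exact hr i (by omega)

lemma flow_prod (h2 : Cond2 P G) (r : ℕ → ℚ) :
    ∀ j i, i < j → (∀ k, k < j → r k < r (k + 1)) →
      G (r i) (r j) =ᵐ[P] fun ω => ∏ k ∈ Finset.Ico i j, G (r k) (r (k + 1)) ω := by
  intro j
  induction j with
  | zero => omega
  | succ j ih =>
    intro i hij hr
    rcases Nat.lt_or_ge i j with h | h
    · have hij' : r i < r j := chain_lt r j i h fun k hk => hr k (by omega)
      have hj : r j < r (j + 1) := hr j (by omega)
      have hflow := (h2 (r i) (r j) (r (j + 1)) hij' hj).symm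
      refine hflow.trans ?_
      have := (ih i h fun k hk => hr k (by omega)).mul
        (EventuallyEq.rfl (f := G (r j) (r (j + 1))) (l := ae P))
      refine this.trans ?_
      refine Eventually.of_forall fun ω => ?_
      simp only [Pi.mul_apply]
      rw [Finset.prod_Ico_succ_top (by omega : i ≤ j)]
    · have : i = j := by omega
      subst this
      refine Eventually.of_forall fun ω => ?_
      simp [Finset.Ico_self, Nat.Ico_succ_singleton]

lemma indep_mono_left {m1 m1' m2 : MeasurableSpace Ω} (h : Indep m1 m2 P)
    (hle : m1' ≤ m1) : Indep m1' m2 P := by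
  rw [Indep_iff] at h ⊢
  intro a b ha hb
  exact h a b (hle a ha) hb

lemma flowFiltration_le (hmeas : ∀ s t : ℚ, Measurable (G s t)) (s : ℚ) :
    flowFiltration G s ≤ m0 := by
  refine iSup_le fun u => iSup_le fun v => iSup_le fun _ => iSup_le fun _ => iSup_le fun _ => ?_
  exact (hmeas u v).comap_le

lemma flowFiltration_eq_biSup (G : ℚ → ℚ → Ω → ℝ) (s : ℚ) :
    flowFiltration G s = ⨆ p ∈ {p : ℚ × ℚ | 0 ≤ p.1 ∧ p.1 ≤ p.2 ∧ p.2 ≤ s},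
      MeasurableSpace.comap (G p.1 p.2) inferInstance := by
  apply le_antisymm
  · refine iSup_le fun u => iSup_le fun v => iSup_le fun h0 => iSup_le fun huv =>
      iSup_le fun hvs => ?_
    exact le_iSup₂ (f := fun (p : ℚ × ℚ) (_ : p ∈ {p : ℚ × ℚ | 0 ≤ p.1 ∧ p.1 ≤ p.2 ∧ p.2 ≤ s}) =>
      MeasurableSpace.comap (G p.1 p.2) inferInstance) (u, v) ⟨h0, huv, hvs⟩
  · refine iSup₂_le fun p hp => ?_
    exact le_iSup_of_le p.1 (le_iSup_of_le p.2 (le_iSup_of_le hp.1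
      (le_iSup_of_le hp.2.1 (le_iSup_of_le hp.2.2 le_rfl))))

/-- The key independence: `G s t` is independent of the flow filtration at `s`. -/
lemma indep_flowFiltration (h1 : Cond1 P G) (h2 : Cond2 P G) (h3 : Cond3 P G 2)
    (hmeas : ∀ s t : ℚ, Measurable (G s t)) (s t : ℚ) (hs : 0 < s) (hst : s < t) :
    Indep (MeasurableSpace.comap (G s t) inferInstance) (flowFiltration G s) P := by
  classical
  set S : Set (ℚ × ℚ) := {p : ℚ × ℚ | 0 ≤ p.1 ∧ p.1 ≤ p.2 ∧ p.2 ≤ s} with hS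
  set π : ℚ × ℚ → Set (Set Ω) :=
    fun p => {A | MeasurableSet[MeasurableSpace.comap (G p.1 p.2) inferInstance] A} with hπ
  have hgen2 : flowFiltration G s = MeasurableSpace.generateFrom (piiUnionInter π S) := by
    rw [flowFiltration_eq_biSup G s,
      generateFrom_piiUnionInter_measurableSet
        (fun p : ℚ × ℚ => MeasurableSpace.comap (G p.1 p.2) inferInstance) S]
  refine IndepSets.indep ((hmeas s t).comap_le) (flowFiltration_le hmeas s)
    (@MeasurableSpace.isPiSystem_measurableSet Ω (MeasurableSpace.comap (G s t) inferInstance))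
    (isPiSystem_piiUnionInter π
      (fun p => @MeasurableSpace.isPiSystem_measurableSet Ω
        (MeasurableSpace.comap (G p.1 p.2) inferInstance)) S)
    (@MeasurableSpace.generateFrom_measurableSet Ω
      (MeasurableSpace.comap (G s t) inferInstance)).symm hgen2 ?_
  rw [IndepSets_iff]
  intro B A hB hA
  obtain ⟨I, hIS, f, hf, rfl⟩ := hA
  -- construct the refinement
  set T : Finset ℚ := insert 0 (insert s ((I.image Prod.fst) ∪ (I.image Prod.snd))) with hT
  have hTs : ∀ x ∈ T, 0 ≤ x ∧ x ≤ s := by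
    intro x hx
    rw [hT] at hx
    simp only [Finset.mem_insert, Finset.mem_union, Finset.mem_image] at hx
    rcases hx with rfl | rfl | ⟨p, hp, rfl⟩ | ⟨p, hp, rfl⟩
    · exact ⟨le_rfl, hs.le⟩
    · exact ⟨hs.le, le_rfl⟩
    · have := hIS hp; exact ⟨this.1, this.2.1.trans this.2.2⟩
    · have := hIS hp; exact ⟨this.1.trans this.2.1, this.2.2⟩
  set l : List ℚ := T.sort (· ≤ ·) with hl
  have hl_sorted : l.Pairwise (· < ·) := T.sortedLT_sort.pairwise
  have hl_pos : 0 < l.length := by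
    rw [hl, Finset.length_sort]
    exact Finset.card_pos.2 ⟨0, by simp [hT]⟩
  set K : ℕ := l.length - 1 with hK
  have hlen : l.length = K + 1 := by omega
  set r : ℕ → ℚ := fun k => if h : k < l.length then l.get ⟨k, h⟩ else 0 with hr
  have hr_lt : ∀ k, k + 1 < l.length → r k < r (k + 1) := by
    intro k hk
    rw [hr]
    simp only [dif_pos hk, dif_pos (by omega : k < l.length)]
    exact hl_sorted.rel_get_of_lt (by simp [Fin.lt_def])
  have hr_mem : ∀ k, k < l.length → r k ∈ T := by
    intro k hk
    rw [hr]
    simp only [dif_pos hk]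
    rw [← Finset.mem_sort (α := ℚ) (· ≤ ·)]
    exact l.get_mem _
  have hr_monchain : ∀ j, j < l.length → ∀ i, i < j → r i < r j := by
    intro j hj i hij
    exact chain_lt r j i hij fun k hk => hr_lt k (by omega)
  have hr_idx : ∀ x ∈ T, ∃ k, k < l.length ∧ r k = x := by
    intro x hx
    rw [← Finset.mem_sort (α := ℚ) (· ≤ ·), ← hl, List.mem_iff_get] at hx
    obtain ⟨⟨k, hk⟩, hkx⟩ := hx
    exact ⟨k, hk, by rw [hr]; simp only [dif_pos hk]; exact hkx⟩
  -- intervals for Cond1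
  set sfun : Fin (K + 1) → ℚ := fun i => if i.val < K then r i.val else s with hsfun
  set tfun : Fin (K + 1) → ℚ := fun i => if i.val < K then r (i.val + 1) else t with htfun
  have hslt : ∀ i, sfun i < tfun i := by
    intro i
    rw [hsfun, htfun]
    by_cases h : i.val < K
    · simp only [if_pos h]; exact hr_lt i.val (by omega)
    · simp only [if_neg h]; exact_mod_cast hst
  have hmono : ∀ i j : Fin (K + 1), i < j → tfun i ≤ sfun j := by
    intro i j hij
    rw [hsfun, htfun]
    have hiK : i.val < K := by
      have := j.isLt; have := Fin.lt_def.1 hij; omega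
    simp only [if_pos hiK]
    by_cases h : j.val < K
    · simp only [if_pos h]
      have hij' : i.val + 1 ≤ j.val := Fin.lt_def.1 hij
      rcases eq_or_lt_of_le hij' with he | hlt
      · rw [he]
      · exact (hr_monchain j.val (by omega) (i.val + 1) hlt).le
    · simp only [if_neg h]
      exact (hTs _ (hr_mem (i.val + 1) (by omega))).2
  have hdisj : Pairwise fun i j : Fin (K + 1) =>
      Disjoint (Set.Ioo (sfun i) (tfun i)) (Set.Ioo (sfun j) (tfun j)) := by
    have key : ∀ i j : Fin (K + 1), i < j →
        Disjoint (Set.Ioo (sfun i) (tfun i)) (Set.Ioo (sfun j) (tfun j)) := by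
      intro i j hij
      refine Set.disjoint_left.2 fun x hx hx' => ?_
      exact absurd (hx.2.trans_le ((hmono i j hij).trans hx'.1.le)) (lt_irrefl x)
    intro i j hne
    rcases lt_or_gt_of_ne hne with h | h
    · exact key i j h
    · exact (key j i h).symm
  have hiind := (h1 (K + 1) sfun tfun hslt hdisj).iIndep
  have hsplit := indep_iSup_of_disjoint
    (fun i => (hmeas (sfun i) (tfun i)).comap_le) hiind
    (S := {i : Fin (K + 1) | i.val < K}) (T := {i : Fin (K + 1) | i.val = K})
    (Set.disjoint_left.2 fun i hi hi' => by simp only [Set.mem_setOf_eq] at hi hi'; omega)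
  set m' : MeasurableSpace Ω :=
    ⨆ i ∈ {i : Fin (K + 1) | i.val < K},
      MeasurableSpace.comap (fun ω => G (sfun i) (tfun i) ω) inferInstance with hm'
  have hYeq : (⨆ i ∈ {i : Fin (K + 1) | i.val = K},
      MeasurableSpace.comap (fun ω => G (sfun i) (tfun i) ω) inferInstance)
      = MeasurableSpace.comap (G s t) inferInstance := by
    apply le_antisymm
    · refine iSup₂_le fun i hi => ?_
      have hi' : i.val = K := hi
      have h1 : sfun i = s := by rw [hsfun]; simp [hi']
      have h2 : tfun i = t := by rw [htfun]; simp [hi']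
      rw [h1, h2]
    · have hK' : (⟨K, by omega⟩ : Fin (K + 1)).val = K := rfl
      have := le_iSup₂ (f := fun (i : Fin (K + 1)) (_ : i ∈ {i : Fin (K + 1) | i.val = K}) =>
        MeasurableSpace.comap (fun ω => G (sfun i) (tfun i) ω) inferInstance)
        (⟨K, by omega⟩ : Fin (K + 1)) hK'
      refine le_trans ?_ this
      have h1 : sfun ⟨K, by omega⟩ = s := by rw [hsfun]; simp
      have h2 : tfun ⟨K, by omega⟩ = t := by rw [htfun]; simp
      rw [h1, h2]
  have hindep : Indep (MeasurableSpace.comap (G s t) inferInstance) m' P := by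
    rw [← hYeq]
    exact hsplit.symm
  -- show each f p is a.e. equal to an m'-measurable set
  have hcomp : ∀ p ∈ I, ∃ gset : Set Ω, MeasurableSet[m'] gset ∧ f p =ᵐ[P] gset := by
    intro p hp
    obtain ⟨Bp, hBp, hBpeq⟩ := hf p hp
    have hpS := hIS hp
    rcases eq_or_lt_of_le hpS.2.1 with heq | hlt
    · -- degenerate: p.1 = p.2, G is a.s. 1
      have hone := diag_ae_one h3 hmeas p.1
      by_cases h1B : (1 : ℝ) ∈ Bp
      · refine ⟨Set.univ, @MeasurableSet.univ Ω m', ?_⟩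
        rw [← hBpeq, ← heq]
        have : ((fun _ : Ω => (1 : ℝ)) ⁻¹' Bp) = Set.univ := by
          ext ω; simp [h1B]
        rw [← this]
        exact preimage_ae_eq hone Bp
      · refine ⟨∅, @MeasurableSet.empty Ω m', ?_⟩
        rw [← hBpeq, ← heq]
        have : ((fun _ : Ω => (1 : ℝ)) ⁻¹' Bp) = ∅ := by
          ext ω; simp [h1B]
        rw [← this]
        exact preimage_ae_eq hone Bp
    · -- nondegenerate: use the flow decomposition
      have hmem1 : p.1 ∈ T := by
        rw [hT]; simp only [Finset.mem_insert, Finset.mem_union, Finset.mem_image]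
        exact Or.inr (Or.inr (Or.inl ⟨p, hp, rfl⟩))
      have hmem2 : p.2 ∈ T := by
        rw [hT]; simp only [Finset.mem_insert, Finset.mem_union, Finset.mem_image]
        exact Or.inr (Or.inr (Or.inr ⟨p, hp, rfl⟩))
      obtain ⟨i, hi, hri⟩ := hr_idx p.1 hmem1
      obtain ⟨j, hj, hrj⟩ := hr_idx p.2 hmem2
      have hij : i < j := by
        by_contra h
        push_neg at h
        rcases eq_or_lt_of_le h with he | hlt'
        · rw [he] at hrj; rw [hri] at hrj; exact absurd hrj (ne_of_gt hlt).symm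
        · exact absurd (hr_monchain i hi j hlt') (by rw [hri, hrj]; exact not_lt.2 hlt.le)
      have hprod := flow_prod h2 r j i hij fun k hk => hr_lt k (by omega)
      rw [hri, hrj] at hprod
      have hmeas_prod : Measurable[m'] fun ω => ∏ k ∈ Finset.Ico i j, G (r k) (r (k + 1)) ω := by
        refine Finset.measurable_prod _ fun k hk => ?_
        have hkK : k < K := by
          have := Finset.mem_Ico.1 hk; omega
        have hks : G (r k) (r (k + 1)) = fun ω => G (sfun ⟨k, by omega⟩) (tfun ⟨k, by omega⟩) ω := by
          rw [hsfun, htfun]; simp [hkK]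
        rw [hks]
        have hle1 : MeasurableSpace.comap
            (fun ω => G (sfun (⟨k, by omega⟩ : Fin (K + 1))) (tfun ⟨k, by omega⟩) ω)
            inferInstance ≤ m' := by
          rw [hm']
          exact le_iSup₂ (f := fun (i : Fin (K + 1)) (_ : i ∈ {i : Fin (K + 1) | i.val < K}) =>
            MeasurableSpace.comap (fun ω => G (sfun i) (tfun i) ω) inferInstance)
            (⟨k, by omega⟩ : Fin (K + 1)) hkK
        exact (measurable_iff_comap_le.2 le_rfl).mono hle1 le_rfl
      refine ⟨(fun ω => ∏ k ∈ Finset.Ico i j, G (r k) (r (k + 1)) ω) ⁻¹' Bp,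
        hmeas_prod hBp, ?_⟩
      rw [← hBpeq]
      exact preimage_ae_eq hprod Bp
  choose! gset hgmeas hgae using hcomp
  have hAae : (⋂ p ∈ I, f p) =ᵐ[P] ⋂ p ∈ I, gset p :=
    biInter_ae_eq I fun p hp => hgae p hp
  have hA'meas : MeasurableSet[m'] (⋂ p ∈ I, gset p) :=
    @Finset.measurableSet_biInter Ω (ℚ × ℚ) m' _ I fun p hp => hgmeas p hp
  rw [Indep_iff] at hindep
  have hBmeas : MeasurableSet[MeasurableSpace.comap (G s t) inferInstance] B := hB
  calc P (B ∩ ⋂ p ∈ I, f p) = P (B ∩ ⋂ p ∈ I, gset p) :=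
        measure_congr (MeasureTheory.ae_eq_set_inter (EventuallyEq.rfl) hAae)
    _ = P B * P (⋂ p ∈ I, gset p) := hindep B _ hBmeas hA'meas
    _ = P B * P (⋂ p ∈ I, f p) := by rw [measure_congr hAae.symm]

end Aux

/-- Under conditions (1), (2), (3_2), the process `X_t := e^{-t/2} G_{0,t}` is a martingale
with respect to the filtration generated by the flow. -/
theorem geometric_brownian_flow_martingale
    {Ω : Type*} [MeasurableSpace Ω] (P : Measure Ω) [IsProbabilityMeasure P]
    (G : ℚ → ℚ → Ω → ℝ) (hmeas : ∀ s t : ℚ, Measurable (G s t))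
    (h1 : Cond1 P G) (h2 : Cond2 P G) (h3 : Cond3 P G 2)
    (X : ℚ → Ω → ℝ) (hX : ∀ t ω, X t ω = Real.exp (-(t : ℝ) / 2) * G 0 t ω) :
    (∀ t : ℚ, 0 < t → Integrable (X t) P) ∧
      ∀ s t : ℚ, 0 < s → s ≤ t →
        P[X t | flowFiltration G s] =ᵐ[P] X s := by
  have hXfun : ∀ t : ℚ, X t = fun ω => Real.exp (-(t : ℝ) / 2) * G 0 t ω :=
    fun t => funext fun ω => hX t ω
  have hint : ∀ t : ℚ, 0 ≤ t → Integrable (X t) P := by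
    intro t ht
    rw [hXfun t]
    exact (integrable_of_cond3 h3 hmeas 0 t (by exact_mod_cast ht)).const_mul _
  refine ⟨fun t ht => hint t ht.le, ?_⟩
  intro s t hs hst
  have hle : flowFiltration G s ≤ ‹MeasurableSpace Ω› := flowFiltration_le hmeas s
  haveI : SigmaFinite (P.trim hle) := by
    haveI := isFiniteMeasure_trim hle (μ := P)
    infer_instance
  have hGs_meas : Measurable[flowFiltration G s] (G 0 s) := by
    have hcle : MeasurableSpace.comap (G 0 s) inferInstance ≤ flowFiltration G s := by
      unfold flowFiltration
      exact le_iSup_of_le 0 (le_iSup_of_le s (le_iSup_of_le le_rfl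
        (le_iSup_of_le (by exact_mod_cast hs.le) (le_iSup_of_le le_rfl le_rfl))))
    exact (measurable_iff_comap_le.2 le_rfl).mono hcle le_rfl
  have hXs_meas : StronglyMeasurable[flowFiltration G s] (X s) := by
    rw [hXfun s]
    exact ((hGs_meas.const_mul _).stronglyMeasurable)
  rcases eq_or_lt_of_le hst with heq | hlt
  · subst heq
    rw [condExp_of_stronglyMeasurable hle hXs_meas (hint s hs.le)]
  · -- s < t
    have hindep := indep_flowFiltration h1 h2 h3 hmeas s t hs hlt
    have hY_sm : StronglyMeasurable[MeasurableSpace.comap (G s t) inferInstance] (G s t) :=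
      (measurable_iff_comap_le.2 le_rfl).stronglyMeasurable
    have hcond : P[G s t | flowFiltration G s] =ᵐ[P] fun _ => ∫ ω, G s t ω ∂P :=
      condExp_indep_eq (hmeas s t).comap_le hle hY_sm hindep
    have hEY : ∫ ω, G s t ω ∂P
        = Real.exp ((1 : ℝ) ^ 2 / 2 * ((t : ℝ) - (s : ℝ))) := by
      have := h3 1 le_rfl one_le_two s t hst
      simpa using this
    set g : Ω → ℝ := fun ω => Real.exp (-(t : ℝ) / 2) * G 0 s ω with hg
    have hg_sm : StronglyMeasurable[flowFiltration G s] g :=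
      (hGs_meas.const_mul _).stronglyMeasurable
    have hprod_ae : (fun ω => Real.exp (-(t : ℝ) / 2) * G 0 t ω) =ᵐ[P] g * G s t := by
      filter_upwards [h2 0 s t (by exact_mod_cast hs) (by exact_mod_cast hlt)] with ω hω
      simp only [Pi.mul_apply, hg]
      rw [← hω]
      ring
    have hXt_ae : X t =ᵐ[P] g * G s t := by
      rw [hXfun t]; exact hprod_ae
    have hfg_int : Integrable (g * G s t) P :=
      ((integrable_of_cond3 h3 hmeas 0 t (by exact_mod_cast hs.le.trans hst)).const_mul
        _).congr hprod_ae
    have hGst_int : Integrable (G s t) P := integrable_of_cond3 h3 hmeas s t hlt.le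
    have pull := condExp_mul_of_stronglyMeasurable_left hg_sm hfg_int hGst_int
    refine (condExp_congr_ae hXt_ae).trans (pull.trans ?_)
    have : g * (P[G s t | flowFiltration G s]) =ᵐ[P] g * fun _ => ∫ ω, G s t ω ∂P :=
      EventuallyEq.mul EventuallyEq.rfl hcond
    refine this.trans ?_
    refine Eventually.of_forall fun ω => ?_
    simp only [Pi.mul_apply, hg]
    rw [hEY, hX s ω]
    have hexp : Real.exp (-(t : ℝ) / 2) * Real.exp ((1 : ℝ) ^ 2 / 2 * ((t : ℝ) - (s : ℝ)))
        = Real.exp (-(s : ℝ) / 2) := by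
      rw [← Real.exp_add]; congr 1; ring
    calc Real.exp (-(t : ℝ) / 2) * G 0 s ω * Real.exp ((1 : ℝ) ^ 2 / 2 * ((t : ℝ) - (s : ℝ)))
        = (Real.exp (-(t : ℝ) / 2) * Real.exp ((1 : ℝ) ^ 2 / 2 * ((t : ℝ) - (s : ℝ)))) *
          G 0 s ω := by ring
      _ = Real.exp (-(s : ℝ) / 2) * G 0 s ω := by rw [hexp]
end

section
/- Suppose the family G satisfies conditions (1), (2), and (3_6). Then for every T > 0 there exists a constant C_T < ∞ such that for all rationals 0 ≤ s ≤ t ≤ T one has E[|G_{0,t} − G_{0,s}|³] ≤ C_T · |t − s|^{3/2}. -/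
open MeasureTheory ProbabilityTheory Filter

section ExpLemmas

lemma myexp_aux1 {x : ℝ} (hx : 0 ≤ x) : Real.exp x - 1 ≤ x * Real.exp x := by
  have h := Real.add_one_le_exp (-x)
  have h2 : Real.exp (-x) * Real.exp x = 1 := by
    rw [← Real.exp_add]; simp
  nlinarith [Real.exp_pos x]

lemma mymono_aux (F F' : ℝ → ℝ) (hd : ∀ x, HasDerivAt F (F' x) x)
    (h0 : ∀ x, 0 ≤ x → 0 ≤ F' x) {x : ℝ} (hx : 0 ≤ x) : F 0 ≤ F x := by
  have hmono : MonotoneOn F (Set.Ici (0:ℝ)) := by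
    apply monotoneOn_of_deriv_nonneg (convex_Ici 0)
    · exact fun y _ => ((hd y).differentiableAt).continuousAt.continuousWithinAt
    · exact fun y _ => ((hd y).differentiableAt).differentiableWithinAt
    · intro y hy
      rw [interior_Ici] at hy
      rw [(hd y).deriv]
      exact h0 y (le_of_lt hy)
  exact hmono Set.self_mem_Ici hx hx

lemma myexp_lower {x : ℝ} (hx : 0 ≤ x) : 1 + x + x^2/2 ≤ Real.exp x := by
  have h := Real.sum_le_exp_of_nonneg hx 3
  have e : ∑ i ∈ Finset.range 3, x ^ i / (Nat.factorial i : ℝ) = 1 + x + x^2/2 := by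
    simp [Finset.sum_range_succ, Nat.factorial]
  linarith [e ▸ h]

lemma myexp_aux2 {x : ℝ} (hx : 0 ≤ x) : Real.exp x ≤ 1 + x + x^2/2 * Real.exp x := by
  have key := mymono_aux (fun z => 1 + z + z^2/2 * Real.exp z - Real.exp z)
    (fun z => 1 + (z * Real.exp z + z^2/2 * Real.exp z) - Real.exp z)
    (by
      intro z
      have h1 : HasDerivAt (fun z : ℝ => z^2/2 * Real.exp z) (z * Real.exp z + z^2/2 * Real.exp z) z := by
        have := (HasDerivAt.mul ((hasDerivAt_pow 2 z).div_const 2) (Real.hasDerivAt_exp z))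
        exact this.congr_deriv (by ring)
      have h2 : HasDerivAt (fun z : ℝ => 1 + z) 1 z := by
        simpa using (hasDerivAt_id z).const_add 1
      exact (h2.add h1).sub (Real.hasDerivAt_exp z))
    (by
      intro z hz
      have := myexp_aux1 hz
      nlinarith [Real.exp_pos z, sq_nonneg z])
    hx
  simp only [Real.exp_zero] at key
  norm_num at key
  linarith

lemma myexp_aux3 {x : ℝ} (hx : 0 ≤ x) : Real.exp x ≤ 1 + x + x^2/2 + x^3/6 * Real.exp x := by
  have key := mymono_aux (fun z => 1 + z + z^2/2 + z^3/6 * Real.exp z - Real.exp z)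
    (fun z => 1 + z + (z^2/2 * Real.exp z + z^3/6 * Real.exp z) - Real.exp z)
    (by
      intro z
      have h1 : HasDerivAt (fun z : ℝ => z^3/6 * Real.exp z) (z^2/2 * Real.exp z + z^3/6 * Real.exp z) z := by
        have := (HasDerivAt.mul ((hasDerivAt_pow 3 z).div_const 6) (Real.hasDerivAt_exp z))
        exact this.congr_deriv (by ring)
      have h2 : HasDerivAt (fun z : ℝ => 1 + z + z^2/2) (1 + z) z := by
        have := (((hasDerivAt_id z).const_add 1).add ((hasDerivAt_pow 2 z).div_const 2))
        exact this.congr_deriv (by ring)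
      exact (h2.add h1).sub (Real.hasDerivAt_exp z))
    (by
      intro z hz
      have := myexp_aux2 hz
      nlinarith [Real.exp_pos z, mul_nonneg (by positivity : (0:ℝ) ≤ z^3/6) (Real.exp_pos z).le])
    hx
  simp only [Real.exp_zero] at key
  norm_num at key
  linarith

lemma myabs_cube {x a : ℝ} (ha : 0 < a) : |x|^3 ≤ (a * x^2 + x^4/a) / 2 := by
  have h2 : x^2 = |x|^2 := (sq_abs x).symm
  have h4 : x^4 = |x|^4 := by
    rw [← abs_pow]; exact (abs_of_nonneg (by positivity)).symm
  rw [h2, h4]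
  have hquot : 2*|x|^3 - a*|x|^2 ≤ |x|^4 / a := by
    rw [le_div_iff₀ ha]; nlinarith [sq_nonneg (a*|x| - |x|^2)]
  linarith

end ExpLemmas

section Aux

variable {Ω : Type*} [MeasurableSpace Ω] (P : Measure Ω) [IsProbabilityMeasure P]
  (G : ℚ → ℚ → Ω → ℝ)

lemma myintegrable (h3 : Cond3 P G 6) {n : ℕ} (h1n : 1 ≤ n) (h6 : n ≤ 6) {u v : ℚ}
    (huv : u ≤ v) : Integrable (fun ω => G u v ω ^ n) P := by
  by_contra hcon
  have h0 := MeasureTheory.integral_undef hcon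
  have := h3 n h1n h6 u v huv
  rw [h0] at this
  exact (Real.exp_pos _).ne' this.symm

lemma mymoments (h3 : Cond3 P G 6) {u v : ℚ} (huv : u ≤ v) :
    (∫ ω, G u v ω ∂P = Real.exp (1/2 * ((v:ℝ) - (u:ℝ)))) ∧
    (∫ ω, (G u v ω)^2 ∂P = Real.exp (2 * ((v:ℝ) - (u:ℝ)))) ∧
    (∫ ω, (G u v ω)^3 ∂P = Real.exp (9/2 * ((v:ℝ) - (u:ℝ)))) ∧
    (∫ ω, (G u v ω)^4 ∂P = Real.exp (8 * ((v:ℝ) - (u:ℝ)))) := by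
  refine ⟨?_, ?_, ?_, ?_⟩
  · have := h3 1 le_rfl (by norm_num) u v huv
    simp only [pow_one] at this
    rw [this]; norm_num
  · rw [h3 2 (by norm_num) (by norm_num) u v huv]; norm_num
  · rw [h3 3 (by norm_num) (by norm_num) u v huv]; norm_num
  · rw [h3 4 (by norm_num) (by norm_num) u v huv]; norm_num

lemma mysqmoment (h3 : Cond3 P G 6) {u v : ℚ} (huv : u ≤ v) :
    Integrable (fun ω => (G u v ω - 1)^2) P ∧
    ∫ ω, (G u v ω - 1)^2 ∂P
      = Real.exp (2 * ((v:ℝ) - (u:ℝ))) - 2 * Real.exp (1/2 * ((v:ℝ) - (u:ℝ))) + 1 := by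
  obtain ⟨hm1, hm2, -, -⟩ := mymoments P G h3 huv
  have I1 : Integrable (fun ω => G u v ω) P := by
    have := myintegrable P G h3 (le_refl 1) (by norm_num) huv
    simpa using this
  have I2 := myintegrable P G h3 (n := 2) (by norm_num) (by norm_num) huv
  have e : (fun ω => (G u v ω - 1)^2)
      = (fun ω => ((G u v ω)^2 - 2 * G u v ω) + 1) := by
    funext ω; ring
  have J1 : Integrable (fun ω => (G u v ω)^2 - 2 * G u v ω) P := I2.sub (I1.const_mul 2)
  have Int : Integrable (fun ω => (G u v ω - 1)^2) P := by
    rw [e]; exact J1.add (integrable_const 1)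
  refine ⟨Int, ?_⟩
  rw [e, integral_add J1 (integrable_const 1),
    integral_sub I2 (I1.const_mul 2), integral_const_mul, hm1, hm2]
  simp

lemma myfourthmoment (h3 : Cond3 P G 6) {u v : ℚ} (huv : u ≤ v) :
    Integrable (fun ω => (G u v ω - 1)^4) P ∧
    ∫ ω, (G u v ω - 1)^4 ∂P
      = Real.exp (8 * ((v:ℝ) - (u:ℝ))) - 4 * Real.exp (9/2 * ((v:ℝ) - (u:ℝ)))
        + 6 * Real.exp (2 * ((v:ℝ) - (u:ℝ))) - 4 * Real.exp (1/2 * ((v:ℝ) - (u:ℝ))) + 1 := by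
  obtain ⟨hm1, hm2, hm3, hm4⟩ := mymoments P G h3 huv
  have I1 : Integrable (fun ω => G u v ω) P := by
    have := myintegrable P G h3 (le_refl 1) (by norm_num) huv
    simpa using this
  have I2 := myintegrable P G h3 (n := 2) (by norm_num) (by norm_num) huv
  have I3 := myintegrable P G h3 (n := 3) (by norm_num) (by norm_num) huv
  have I4 := myintegrable P G h3 (n := 4) (by norm_num) (by norm_num) huv
  have e : (fun ω => (G u v ω - 1)^4)
      = (fun ω => ((((G u v ω)^4 - 4 * (G u v ω)^3) + 6 * (G u v ω)^2) - 4 * G u v ω) + 1) := by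
    funext ω; ring
  have J1 : Integrable (fun ω => (G u v ω)^4 - 4 * (G u v ω)^3) P := I4.sub (I3.const_mul 4)
  have J2 : Integrable (fun ω => ((G u v ω)^4 - 4 * (G u v ω)^3) + 6 * (G u v ω)^2) P :=
    J1.add (I2.const_mul 6)
  have J3 : Integrable
      (fun ω => (((G u v ω)^4 - 4 * (G u v ω)^3) + 6 * (G u v ω)^2) - 4 * G u v ω) P :=
    J2.sub (I1.const_mul 4)
  have Int : Integrable (fun ω => (G u v ω - 1)^4) P := by
    rw [e]; exact J3.add (integrable_const 1)
  refine ⟨Int, ?_⟩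
  rw [e, integral_add J3 (integrable_const 1), integral_sub J2 (I1.const_mul 4),
    integral_add J1 (I2.const_mul 6), integral_sub I4 (I3.const_mul 4),
    integral_const_mul, integral_const_mul, integral_const_mul, hm1, hm2, hm3, hm4]
  simp

lemma mykey (hmeas : ∀ s t : ℚ, Measurable (G s t)) (h3 : Cond3 P G 6) {T : ℝ} (hT : 0 < T) {u v : ℚ} (huv : u < v)
    (hvT : (v:ℝ) - (u:ℝ) ≤ T) :
    Integrable (fun ω => |G u v ω - 1|^3) P ∧
    ∫ ω, |G u v ω - 1|^3 ∂P
      ≤ (2*Real.exp (2*T) + (3 + 512/6*T*Real.exp (8*T) + 8*T*Real.exp (2*T)))/2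
        * (((v:ℝ)-(u:ℝ)) * Real.sqrt ((v:ℝ)-(u:ℝ))) := by
  set d : ℝ := (v:ℝ) - (u:ℝ) with hd
  have hd0 : 0 < d := by
    rw [hd]; simp only [sub_pos]; exact_mod_cast huv
  obtain ⟨Int2, hM2⟩ := mysqmoment P G h3 huv.le
  obtain ⟨Int4, hM4⟩ := myfourthmoment P G h3 huv.le
  rw [← hd] at hM2 hM4
  clear_value d
  -- bound on the second moment
  have bM2 : Real.exp (2*d) - 2*Real.exp (1/2*d) + 1 ≤ 2*Real.exp (2*T)*d := by
    have b1 := myexp_aux1 (by positivity : (0:ℝ) ≤ 2*d)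
    have b2 : Real.exp (2*d) ≤ Real.exp (2*T) := Real.exp_le_exp.mpr (by linarith)
    have b3 := Real.add_one_le_exp (1/2*d)
    have q : 2*d*Real.exp (2*d) ≤ 2*d*Real.exp (2*T) :=
      mul_le_mul_of_nonneg_left b2 (by linarith)
    linarith
  -- bound on the fourth moment
  have bM4 : Real.exp (8*d) - 4*Real.exp (9/2*d) + 6*Real.exp (2*d) - 4*Real.exp (1/2*d) + 1
      ≤ (3 + 512/6*T*Real.exp (8*T) + 8*T*Real.exp (2*T)) * d^2 := by
    have hA := myexp_aux3 (by positivity : (0:ℝ) ≤ 8*d)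
    have hA' : Real.exp (8*d) ≤ Real.exp (8*T) := Real.exp_le_exp.mpr (by linarith)
    have hB := myexp_aux3 (by positivity : (0:ℝ) ≤ 2*d)
    have hB' : Real.exp (2*d) ≤ Real.exp (2*T) := Real.exp_le_exp.mpr (by linarith)
    have hC1 := myexp_lower (by positivity : (0:ℝ) ≤ 9/2*d)
    have hC2 := myexp_lower (by positivity : (0:ℝ) ≤ 1/2*d)
    have p1 : d^3 ≤ T*d^2 := by nlinarith
    have p2 : d^3 * Real.exp (8*d) ≤ T*d^2*Real.exp (8*T) :=
      mul_le_mul p1 hA' (Real.exp_pos _).le (by nlinarith)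
    have p3 : d^3 * Real.exp (2*d) ≤ T*d^2*Real.exp (2*T) :=
      mul_le_mul p1 hB' (Real.exp_pos _).le (by nlinarith)
    linarith
  -- integrability of the absolute third power
  have hmeas3 : AEStronglyMeasurable (fun ω => |G u v ω - 1|^3) P :=
    ((((hmeas u v).sub measurable_const).abs.pow_const 3)).aestronglyMeasurable
  have Int3 : Integrable (fun ω => |G u v ω - 1|^3) P := by
    refine Integrable.mono' ((Int2.add Int4).div_const 2) hmeas3 ?_
    filter_upwards with ω
    rw [Real.norm_eq_abs, abs_of_nonneg (by positivity)]
    have := myabs_cube (x := G u v ω - 1) (a := 1) one_pos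
    simpa using this
  refine ⟨Int3, ?_⟩
  -- AM-GM with parameter sqrt d
  have hsq : 0 < Real.sqrt d := Real.sqrt_pos.mpr hd0
  have e : (fun ω => (Real.sqrt d * (G u v ω - 1)^2 + (G u v ω - 1)^4 / Real.sqrt d) / 2)
      = (fun ω => (Real.sqrt d/2) * (G u v ω - 1)^2 + (G u v ω - 1)^4 * (2*Real.sqrt d)⁻¹) := by
    funext ω
    field_simp
  have hmono : ∫ ω, |G u v ω - 1|^3 ∂P
      ≤ ∫ ω, (Real.sqrt d * (G u v ω - 1)^2 + (G u v ω - 1)^4 / Real.sqrt d) / 2 ∂P := by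
    refine integral_mono Int3 ?_ (fun ω => myabs_cube hsq)
    rw [e]
    exact (Int2.const_mul _).add (Int4.mul_const _)
  have hval : ∫ ω, (Real.sqrt d * (G u v ω - 1)^2 + (G u v ω - 1)^4 / Real.sqrt d) / 2 ∂P
      = (Real.sqrt d/2) * (∫ ω, (G u v ω - 1)^2 ∂P)
        + (∫ ω, (G u v ω - 1)^4 ∂P) * (2*Real.sqrt d)⁻¹ := by
    rw [e, integral_add (Int2.const_mul _) (Int4.mul_const _), integral_const_mul,
      integral_mul_const]
  rw [hval, hM2, hM4] at hmono
  refine hmono.trans ?_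
  have hdd : d^2 * (2*Real.sqrt d)⁻¹ = (d * Real.sqrt d)/2 := by
    have h : Real.sqrt d * Real.sqrt d = d := Real.mul_self_sqrt hd0.le
    have hne : Real.sqrt d ≠ 0 := hsq.ne'
    field_simp
    linear_combination (-1) * Real.sq_sqrt hd0.le
  have e1 : (Real.sqrt d/2) * (Real.exp (2*d) - 2*Real.exp (1/2*d) + 1)
      ≤ (Real.sqrt d/2) * (2*Real.exp (2*T)*d) :=
    mul_le_mul_of_nonneg_left bM2 (by positivity)
  have e2 : (Real.exp (8*d) - 4*Real.exp (9/2*d) + 6*Real.exp (2*d) - 4*Real.exp (1/2*d) + 1)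
        * (2*Real.sqrt d)⁻¹
      ≤ ((3 + 512/6*T*Real.exp (8*T) + 8*T*Real.exp (2*T)) * d^2) * (2*Real.sqrt d)⁻¹ :=
    mul_le_mul_of_nonneg_right bM4 (by positivity)
  have e1' : (Real.sqrt d/2) * (2*Real.exp (2*T)*d) = Real.exp (2*T) * (d * Real.sqrt d) := by
    ring
  have e2' : ((3 + 512/6*T*Real.exp (8*T) + 8*T*Real.exp (2*T)) * d^2) * (2*Real.sqrt d)⁻¹
      = (3 + 512/6*T*Real.exp (8*T) + 8*T*Real.exp (2*T)) * ((d * Real.sqrt d)/2) := by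
    rw [mul_assoc, hdd]
  rw [e1'] at e1
  rw [e2'] at e2
  linarith

lemma mycube (hmeas : ∀ s t : ℚ, Measurable (G s t)) (h3 : Cond3 P G 6) {T : ℝ} (hT : 0 < T)
    {u v : ℚ} (huv : u ≤ v) (hvT : (v:ℝ) - (u:ℝ) ≤ T) :
    ∫ ω, |G u v ω|^3 ∂P ≤ Real.exp (8*T) := by
  obtain ⟨-, hm2, -, hm4⟩ := mymoments P G h3 huv
  have hd0 : (0:ℝ) ≤ (v:ℝ) - (u:ℝ) := by
    simp only [sub_nonneg]; exact_mod_cast huv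
  have I2 := myintegrable P G h3 (n := 2) (by norm_num) (by norm_num) huv
  have I4 := myintegrable P G h3 (n := 4) (by norm_num) (by norm_num) huv
  have hmeas3 : AEStronglyMeasurable (fun ω => |G u v ω|^3) P :=
    ((hmeas u v).abs.pow_const 3).aestronglyMeasurable
  have Int3 : Integrable (fun ω => |G u v ω|^3) P := by
    refine Integrable.mono' ((I2.add I4).div_const 2) hmeas3 ?_
    filter_upwards with ω
    rw [Real.norm_eq_abs, abs_of_nonneg (by positivity)]
    have := myabs_cube (x := G u v ω) (a := 1) one_pos
    simpa using this
  have hmono : ∫ ω, |G u v ω|^3 ∂P ≤ ∫ ω, ((G u v ω)^2 + (G u v ω)^4)/2 ∂P := by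
    refine integral_mono Int3 ((I2.add I4).div_const 2) (fun ω => ?_)
    have := myabs_cube (x := G u v ω) (a := 1) one_pos
    simpa using this
  have hval : ∫ ω, ((G u v ω)^2 + (G u v ω)^4)/2 ∂P
      = (Real.exp (2*((v:ℝ)-(u:ℝ))) + Real.exp (8*((v:ℝ)-(u:ℝ))))/2 := by
    rw [integral_div, integral_add I2 I4, hm2, hm4]
  rw [hval] at hmono
  refine hmono.trans ?_
  have b1 : Real.exp (2*((v:ℝ)-(u:ℝ))) ≤ Real.exp (8*T) := Real.exp_le_exp.mpr (by linarith)
  have b2 : Real.exp (8*((v:ℝ)-(u:ℝ))) ≤ Real.exp (8*T) := Real.exp_le_exp.mpr (by linarith)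
  linarith


end Aux

/-- Under conditions (1), (2), (3_6): a third-moment Hölder-1/2 type increment bound,
`E[|G_{0,t} - G_{0,s}|³] ≤ C_T |t-s|^{3/2}` for rationals `0 ≤ s ≤ t ≤ T`. -/
theorem geometric_brownian_flow_increment_bound
    {Ω : Type*} [MeasurableSpace Ω] (P : Measure Ω) [IsProbabilityMeasure P]
    (G : ℚ → ℚ → Ω → ℝ) (hmeas : ∀ s t : ℚ, Measurable (G s t))
    (h1 : Cond1 P G) (h2 : Cond2 P G) (h3 : Cond3 P G 6) :
    ∀ T : ℝ, 0 < T → ∃ C : ℝ, ∀ s t : ℚ, 0 ≤ s → s ≤ t → (t : ℝ) ≤ T →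
      ∫ ω, |G 0 t ω - G 0 s ω| ^ 3 ∂P ≤ C * ((t : ℝ) - (s : ℝ)) ^ ((3 : ℝ) / 2) := by
  intro T hT
  set K : ℝ := (2*Real.exp (2*T) + (3 + 512/6*T*Real.exp (8*T) + 8*T*Real.exp (2*T)))/2 with hK
  have hK0 : 0 ≤ K := by rw [hK]; positivity
  refine ⟨Real.exp (8*T) * K, ?_⟩
  intro s t hs hst htT
  rcases eq_or_lt_of_le hst with heq | hlt
  · -- s = t : both sides vanish
    subst heq
    have hL : (fun ω => |G 0 s ω - G 0 s ω|^3) = fun _ => (0:ℝ) := by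
      funext ω; simp
    rw [hL, integral_zero, sub_self, Real.zero_rpow (by norm_num), mul_zero]
  · -- s < t
    have hslt : (s:ℝ) < (t:ℝ) := by exact_mod_cast hlt
    have hs0' : (0:ℝ) ≤ (s:ℝ) := by exact_mod_cast hs
    have hdpos : (0:ℝ) < (t:ℝ) - (s:ℝ) := by linarith
    have hdT : (t:ℝ) - (s:ℝ) ≤ T := by linarith
    have hrpow : ((t:ℝ)-(s:ℝ))^((3:ℝ)/2)
        = ((t:ℝ)-(s:ℝ)) * Real.sqrt ((t:ℝ)-(s:ℝ)) := by
      rw [show ((3:ℝ)/2) = 1 + 1/2 by norm_num, Real.rpow_add hdpos, Real.rpow_one,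
        Real.sqrt_eq_rpow]
    rcases eq_or_lt_of_le hs with hs0 | hs0
    · -- s = 0 : use G₀₀ = 1 a.s.
      subst hs0
      have h00 : (0:ℚ) ≤ 0 := le_refl 0
      obtain ⟨Int2', hM2'⟩ := mysqmoment P G h3 h00
      have hzero : ∫ ω, (G 0 0 ω - 1)^2 ∂P = 0 := by
        rw [hM2']; norm_num
      have hae : (fun ω => (G 0 0 ω - 1)^2) =ᵐ[P] 0 :=
        (integral_eq_zero_iff_of_nonneg (fun ω => sq_nonneg _) Int2').mp hzero
      have hone : ∀ᵐ ω ∂P, G 0 0 ω = 1 := by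
        filter_upwards [hae] with ω hω
        have : (G 0 0 ω - 1)^2 = 0 := hω
        have := (pow_eq_zero_iff two_ne_zero).mp this
        linarith
      have hcongr : ∫ ω, |G 0 t ω - G 0 0 ω|^3 ∂P = ∫ ω, |G 0 t ω - 1|^3 ∂P := by
        refine integral_congr_ae ?_
        filter_upwards [hone] with ω hω
        rw [hω]
      rw [hcongr]
      obtain ⟨-, hkey⟩ := mykey P G hmeas h3 hT hlt (by push_cast; linarith)
      have hb : ∫ ω, |G 0 t ω - 1|^3 ∂P
          ≤ K * (((t:ℝ)-((0:ℚ):ℝ)) * Real.sqrt ((t:ℝ)-((0:ℚ):ℝ))) := hkey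
      have h1T : (1:ℝ) ≤ Real.exp (8*T) := by
        rw [show (1:ℝ) = Real.exp 0 by simp]
        exact Real.exp_le_exp.mpr (by linarith)
      simp only [Rat.cast_zero, sub_zero] at hrpow hb ⊢
      rw [hrpow]
      have hnn : 0 ≤ ((t:ℝ)) * Real.sqrt ((t:ℝ)) := by positivity
      have hstep : K * ((t:ℝ) * Real.sqrt (t:ℝ))
          ≤ Real.exp (8*T) * (K * ((t:ℝ) * Real.sqrt (t:ℝ))) :=
        le_mul_of_one_le_left (mul_nonneg hK0 hnn) h1T
      nlinarith [hb, hstep]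
    · -- 0 < s : use the flow property and independence
      have hflow := h2 0 s t hs0 hlt
      have hcongr : ∫ ω, |G 0 t ω - G 0 s ω|^3 ∂P
          = ∫ ω, |G 0 s ω|^3 * |G s t ω - 1|^3 ∂P := by
        refine integral_congr_ae ?_
        filter_upwards [hflow] with ω hω
        have he : G 0 s ω * G s t ω - G 0 s ω = G 0 s ω * (G s t ω - 1) := by ring
        rw [← hω, he, abs_mul, mul_pow]
      have hdisj : Disjoint (Set.Ioo (0:ℚ) s) (Set.Ioo s t) :=
        Set.Ioo_disjoint_Ioo.mpr (by simp [min_le_iff, le_max_iff])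
      have hind := (h1 2 ![0, s] ![s, t]
        (by
          intro i
          fin_cases i
          · simpa using hs0
          · simpa using hlt)
        (by
          intro i j hij
          fin_cases i <;> fin_cases j
          · exact absurd rfl hij
          · simpa using hdisj
          · simpa using hdisj.symm
          · exact absurd rfl hij)).indepFun (show (0 : Fin 2) ≠ 1 by decide)
      simp only [Matrix.cons_val_zero, Matrix.cons_val_one, Matrix.head_cons] at hind
      have hindc := hind.comp (φ := fun x : ℝ => |x|^3) (ψ := fun x : ℝ => |x - 1|^3)
        (measurable_id.abs.pow_const 3)
        ((measurable_id.sub measurable_const).abs.pow_const 3)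
      have hprod : ∫ ω, |G 0 s ω|^3 * |G s t ω - 1|^3 ∂P
          = (∫ ω, |G 0 s ω|^3 ∂P) * ∫ ω, |G s t ω - 1|^3 ∂P :=
        IndepFun.integral_fun_mul_eq_mul_integral (X := fun ω => |G 0 s ω|^3)
          (Y := fun ω => |G s t ω - 1|^3) hindc
          (((hmeas 0 s).abs.pow_const 3).aestronglyMeasurable)
          ((((hmeas s t).sub measurable_const).abs.pow_const 3).aestronglyMeasurable)
      obtain ⟨-, hkey⟩ := mykey P G hmeas h3 hT hlt hdT
      have hcube := mycube P G hmeas h3 hT hs (by push_cast; linarith)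
      have hXnn : 0 ≤ ∫ ω, |G s t ω - 1|^3 ∂P :=
        integral_nonneg (fun ω => by positivity)
      rw [hcongr, hprod, hrpow]
      calc (∫ ω, |G 0 s ω|^3 ∂P) * ∫ ω, |G s t ω - 1|^3 ∂P
          ≤ Real.exp (8*T) * (K * (((t:ℝ)-(s:ℝ)) * Real.sqrt ((t:ℝ)-(s:ℝ)))) :=
            mul_le_mul hcube hkey hXnn (Real.exp_pos _).le
        _ = Real.exp (8*T) * K * (((t:ℝ)-(s:ℝ)) * Real.sqrt ((t:ℝ)-(s:ℝ))) := by ring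
end
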